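/- Let G ∈ H₃ with |X| ≥ 2. Then χ(G) = |X| + 1, witnessed by a coloring assigning distinct colors to X ∪ {v₁}, with v₄ colored like v₁, v₂ and v₆ colored like some x ∈ X, and v₃ and v₅ colored like some other x' ∈ X. -/
import Mathlib


open SimpleGraph

/-- A proper coloring of `G` with colors in `Fin ℓ`. -/
def IsProperColoring {V : Type*} (G : SimpleGraph V) (ℓ : ℕ) (f : V → Fin ℓ) : Prop :=
  ∀ ⦃a b : V⦄, G.Adj a b → f a ≠ f b

/-- A walk in the reconfiguration graph `R_ℓ(G)`: a sequence `c 0, c 1, …, c m` of proper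
`ℓ`-colorings of `G` in which consecutive colorings differ on at most one vertex. -/
def IsRecolorSeq {V : Type*} (G : SimpleGraph V) (ℓ m : ℕ) (c : ℕ → V → Fin ℓ) : Prop :=
  (∀ i ≤ m, IsProperColoring G ℓ (c i)) ∧
    ∀ i < m, ∀ a b : V, a ≠ b → c i a ≠ c (i + 1) a → c i b = c (i + 1) b

/-- The number of times the vertex `a` is recolored along the sequence `c 0, …, c m`. -/
def recolorCount {V : Type*} {ℓ : ℕ} (m : ℕ) (c : ℕ → V → Fin ℓ) (a : V) : ℕ :=
  ((Finset.range m).filter fun i => c i a ≠ c (i + 1) a).card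

/-- The cycle `Cₙ` on `Fin n` (for `n ≥ 3`). -/
def cyc (n : ℕ) [NeZero n] : SimpleGraph (Fin n) := SimpleGraph.fromRel fun a b => a + 1 = b

/-- The graph `P₂ + P₃`, the disjoint union of an edge and a path on three vertices. -/
def p2p3 : SimpleGraph (Fin 5) := SimpleGraph.fromRel fun a b =>
  (a = 0 ∧ b = 1) ∨ (a = 2 ∧ b = 3) ∨ (a = 3 ∧ b = 4)

/-- Adjacency in the 6-cycle on `Fin 6` (indices mod 6). -/
def c6adj (i j : Fin 6) : Prop := i + 1 = j ∨ j + 1 = i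

/-- The class `H₃`: six vertices `v 0, …, v 5` inducing a 6-cycle together with a nonempty
clique `X` complete to `{v 0, v 3}` (i.e. `{v₁, v₄}`), and no other edges. -/
structure H3Data {V : Type*} (G : SimpleGraph V) where
  v : Fin 6 → V
  X : Finset V
  inj : Function.Injective v
  notin : ∀ i, v i ∉ X
  Xne : X.Nonempty
  cover : ∀ x : V, x ∈ X ∨ ∃ i, x = v i
  adj_iff : ∀ x y : V, G.Adj x y ↔ x ≠ y ∧
    ((x ∈ X ∧ y ∈ X) ∨
     (∃ i j : Fin 6, x = v i ∧ y = v j ∧ c6adj i j) ∨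
     (x ∈ X ∧ (y = v 0 ∨ y = v 3)) ∨
     (y ∈ X ∧ (x = v 0 ∨ x = v 3)))

/-- for `G ∈ H₃` with `|X| ≥ 2`, `χ(G) = |X| + 1`, witnessed by a proper
coloring assigning distinct colors to `X ∪ {v₁}`, coloring `v₄` like `v₁`, `v₂, v₆` like
some `x ∈ X` and `v₃, v₅` like some other `x' ∈ X`. -/
theorem stmt11 {V : Type*} [Fintype V] {G : SimpleGraph V} (h : H3Data G)
    (h2 : 2 ≤ h.X.card) :
    G.chromaticNumber = ((h.X.card + 1 : ℕ) : ℕ∞) ∧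
    ∃ c : V → Fin (h.X.card + 1), IsProperColoring G (h.X.card + 1) c ∧
      Set.InjOn c (↑h.X ∪ {h.v 0}) ∧
      c (h.v 3) = c (h.v 0) ∧
      ∃ x ∈ h.X, ∃ x' ∈ h.X, x ≠ x' ∧
        c (h.v 1) = c x ∧ c (h.v 5) = c x ∧ c (h.v 2) = c x' ∧ c (h.v 4) = c x' := by
    classical
  obtain ⟨a, ha, b, hb, hab⟩ := Finset.one_lt_card.mp h2
  set n := h.X.card with hn
  let e := h.X.equivFin
  set ca : Fin (n+1) := (e ⟨a, ha⟩).castSucc with hca_def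
  set cb : Fin (n+1) := (e ⟨b, hb⟩).castSucc with hcb_def
  have hcab : ca ≠ cb := by
    simp only [hca_def, hcb_def]
    intro hh
    exact hab (by simpa using congrArg Subtype.val (e.injective (Fin.castSucc_injective _ hh)))
  set c : V → Fin (n+1) := fun x =>
    if hx : x ∈ h.X then (e ⟨x, hx⟩).castSucc
    else if x = h.v 1 then ca
    else if x = h.v 2 then cb
    else if x = h.v 4 then cb
    else if x = h.v 5 then ca
    else Fin.last n with hc_def
  have cX : ∀ x (hx : x ∈ h.X), c x = (e ⟨x, hx⟩).castSucc := fun x hx => dif_pos hx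
  have hvne : ∀ i j : Fin 6, i ≠ j → h.v i ≠ h.v j := fun i j hij => fun hh => hij (h.inj hh)
  have cvgen : ∀ i : Fin 6, i ≠ 1 → i ≠ 2 → i ≠ 4 → i ≠ 5 → c (h.v i) = Fin.last n := by
    intro i h1 h2 h4 h5
    simp only [hc_def]
    rw [dif_neg (h.notin i), if_neg (hvne i 1 h1), if_neg (hvne i 2 h2),
      if_neg (hvne i 4 h4), if_neg (hvne i 5 h5)]
  have cv0 : c (h.v 0) = Fin.last n := cvgen 0 (by decide) (by decide) (by decide) (by decide)
  have cv3 : c (h.v 3) = Fin.last n := cvgen 3 (by decide) (by decide) (by decide) (by decide)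
  have cv1 : c (h.v 1) = ca := by
    simp only [hc_def]; rw [dif_neg (h.notin 1)]; simp
  have cv2 : c (h.v 2) = cb := by
    simp only [hc_def]
    rw [dif_neg (h.notin 2)]; simp [hvne 2 1 (by decide)]
  have cv4 : c (h.v 4) = cb := by
    simp only [hc_def]
    rw [dif_neg (h.notin 4)]; simp [hvne 4 1 (by decide), hvne 4 2 (by decide)]
  have cv5 : c (h.v 5) = ca := by
    simp only [hc_def]
    rw [dif_neg (h.notin 5)]
    simp [hvne 5 1 (by decide), hvne 5 2 (by decide), hvne 5 4 (by decide)]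
  have hlca : ca ≠ Fin.last n := Fin.ne_of_lt (Fin.castSucc_lt_last _)
  have hlcb : cb ≠ Fin.last n := Fin.ne_of_lt (Fin.castSucc_lt_last _)
  have hlast : ∀ x (hx : x ∈ h.X), c x ≠ Fin.last n := by
    intro x hx
    rw [cX x hx]
    exact Fin.ne_of_lt (Fin.castSucc_lt_last _)
  have hproper : IsProperColoring G (n+1) c := by
    intro p q hpq
    obtain ⟨hne, hcase⟩ := (h.adj_iff p q).mp hpq
    rcases hcase with ⟨hp, hq⟩ | ⟨i, j, rfl, rfl, hij⟩ | ⟨hp, hq⟩ | ⟨hq, hp⟩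
    · rw [cX p hp, cX q hq]
      intro hh
      exact hne (by simpa using congrArg Subtype.val (e.injective (Fin.castSucc_injective _ hh)))
    · have key01 : c (h.v 0) ≠ c (h.v 1) := by rw [cv0, cv1]; exact fun hh => hlca hh.symm
      have key12 : c (h.v 1) ≠ c (h.v 2) := by rw [cv1, cv2]; exact hcab
      have key23 : c (h.v 2) ≠ c (h.v 3) := by rw [cv2, cv3]; exact hlcb
      have key34 : c (h.v 3) ≠ c (h.v 4) := by rw [cv3, cv4]; exact fun hh => hlcb hh.symm
      have key45 : c (h.v 4) ≠ c (h.v 5) := by rw [cv4, cv5]; exact fun hh => hcab hh.symm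
      have key50 : c (h.v 5) ≠ c (h.v 0) := by rw [cv5, cv0]; exact hlca
      have key : ∀ i j : Fin 6, i + 1 = j → c (h.v i) ≠ c (h.v j) := by
        intro i j hij
        subst hij
        fin_cases i
        · exact key01
        · exact key12
        · exact key23
        · exact key34
        · exact key45
        · exact key50
      rcases hij with hij | hij
      · exact key i j hij
      · exact (key j i hij).symm
    · have : c q = Fin.last n := by rcases hq with rfl | rfl <;> simp [cv0, cv3]
      rw [this]; exact hlast p hp
    · have : c p = Fin.last n := by rcases hp with rfl | rfl <;> simp [cv0, cv3]
      rw [this]; exact fun hh => hlast q hq hh.symm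
  have hv0 := cv0
  have hinj : Set.InjOn c (↑h.X ∪ {h.v 0}) := by
    rintro p (hp | hp) q (hq | hq) hcpq
    · have := cX p hp ▸ cX q hq ▸ hcpq
      simpa using congrArg Subtype.val (e.injective (Fin.castSucc_injective _ this))
    · exact absurd (show c p = Fin.last n by
        rw [hcpq, Set.mem_singleton_iff.mp hq, hv0]) (hlast p hp)
    · exact absurd (show c q = Fin.last n by
        rw [← hcpq, Set.mem_singleton_iff.mp hp, hv0]) (hlast q hq)
    · rw [Set.mem_singleton_iff.mp hp, Set.mem_singleton_iff.mp hq]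
  have hχ : G.chromaticNumber = ((n + 1 : ℕ) : ℕ∞) := by
    refine le_antisymm ?_ ?_
    · simpa using
        (SimpleGraph.Coloring.mk c (fun hadj => hproper hadj)).colorable.chromaticNumber_le
    · have hclique : G.IsClique (insert (h.v 0) h.X : Finset V) := by
        intro x hx y hy hxy
        simp only [Finset.coe_insert, Set.mem_insert_iff, Finset.mem_coe] at hx hy
        rw [h.adj_iff]
        refine ⟨hxy, ?_⟩
        rcases hx with rfl | hx <;> rcases hy with rfl | hy
        · exact absurd rfl hxy
        · exact Or.inr (Or.inr (Or.inr ⟨hy, Or.inl rfl⟩))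
        · exact Or.inr (Or.inr (Or.inl ⟨hx, Or.inl rfl⟩))
        · exact Or.inl ⟨hx, hy⟩
      have hcard : (insert (h.v 0) h.X).card = n + 1 := by
        rw [Finset.card_insert_of_notMem (h.notin 0)]
      have := hclique.card_le_chromaticNumber
      rwa [hcard] at this
  refine ⟨hχ, c, hproper, hinj, ?_, a, ha, b, hb, hab, ?_, ?_, ?_, ?_⟩
  · rw [hv0, cv3]
  · rw [cX a ha, cv1]
  · rw [cX a ha, cv5]
  · rw [cX b hb, cv2]
  · rw [cX b hb, cv4]
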